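/- (Log-corrected Hölder for polynomial tails) Let X, Y be nonnegative random variables with ‖Y‖_p ≤ σ_Y p^C for all p ≥ 2. Then E[XY] ≤ ‖X‖_1 · σ_Y · (2e)^C · max(1, (1/C)·log(‖X‖_2/‖X‖_1))^C. -/

import Mathlib

open MeasureTheory

open ENNReal in
lemma holder_step {Ω : Type*} [MeasurableSpace Ω] (μ : Measure Ω) (F G : Ω → ℝ≥0∞)
    (hF : Measurable F) (hG : Measurable G) {ε : ℝ} (hε0 : 0 < ε) (hε1 : ε < 1) :
    ∫⁻ ω, F ω * G ω ∂μ ≤ (∫⁻ ω, F ω ∂μ) ^ (1 - ε) *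
      ((∫⁻ ω, F ω ^ (2:ℝ) ∂μ) ^ ((1:ℝ)/2) * (∫⁻ ω, G ω ^ (2/ε) ∂μ) ^ ((1:ℝ)/2)) ^ ε := by
  have h1ε : (0:ℝ) < 1 - ε := by linarith
  have hpq : Real.HolderConjugate (1-ε)⁻¹ ε⁻¹ := by
    rw [Real.holderConjugate_iff]; constructor
    · rw [one_lt_inv_iff₀]; constructor <;> [exact h1ε; linarith]
    · rw [inv_inv, inv_inv]; ring
  have key : ∫⁻ ω, F ω * G ω ∂μ ≤
      (∫⁻ ω, (F ω ^ (1-ε)) ^ ((1-ε)⁻¹) ∂μ) ^ (1/(1-ε)⁻¹) *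
      (∫⁻ ω, (F ω ^ ε * G ω) ^ (ε⁻¹) ∂μ) ^ (1/ε⁻¹) := by
    have := ENNReal.lintegral_mul_le_Lp_mul_Lq μ hpq
      (f := fun ω => F ω ^ (1-ε)) (g := fun ω => F ω ^ ε * G ω)
      ((hF.pow_const _).aemeasurable) (((hF.pow_const _).mul hG).aemeasurable)
    refine le_trans (le_of_eq ?_) this
    apply lintegral_congr; intro ω
    simp only [Pi.mul_apply]
    rw [← mul_assoc, ← ENNReal.rpow_add_of_nonneg _ _ (le_of_lt h1ε) (le_of_lt hε0)]
    norm_num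
  have e1 : (∫⁻ ω, (F ω ^ (1-ε)) ^ ((1-ε)⁻¹) ∂μ) ^ (1/(1-ε)⁻¹)
      = (∫⁻ ω, F ω ∂μ) ^ (1 - ε) := by
    rw [one_div, inv_inv]
    congr 1
    apply lintegral_congr; intro ω
    rw [← ENNReal.rpow_mul, mul_inv_cancel₀ (ne_of_gt h1ε), ENNReal.rpow_one]
  have e2 : (∫⁻ ω, (F ω ^ ε * G ω) ^ (ε⁻¹) ∂μ) = ∫⁻ ω, F ω * G ω ^ (ε⁻¹) ∂μ := by
    apply lintegral_congr; intro ω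
    rw [ENNReal.mul_rpow_of_nonneg _ _ (by positivity), ← ENNReal.rpow_mul,
      mul_inv_cancel₀ (ne_of_gt hε0), ENNReal.rpow_one]
  have h2 : ∫⁻ ω, F ω * G ω ^ (ε⁻¹) ∂μ ≤
      (∫⁻ ω, F ω ^ (2:ℝ) ∂μ) ^ ((1:ℝ)/2) * (∫⁻ ω, G ω ^ (2/ε) ∂μ) ^ ((1:ℝ)/2) := by
    have h22 : Real.HolderConjugate 2 2 := by rw [Real.holderConjugate_iff]; constructor <;> norm_num
    have := ENNReal.lintegral_mul_le_Lp_mul_Lq μ h22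
      (f := F) (g := fun ω => G ω ^ (ε⁻¹)) hF.aemeasurable (hG.pow_const _).aemeasurable
    refine le_trans (le_of_eq (by simp [Pi.mul_apply])) (le_trans this (le_of_eq ?_))
    congr 2
    apply lintegral_congr; intro ω
    rw [← ENNReal.rpow_mul]
    congr 1
    field_simp
  calc ∫⁻ ω, F ω * G ω ∂μ ≤ _ := key
  _ = (∫⁻ ω, F ω ∂μ) ^ (1-ε) * (∫⁻ ω, F ω * G ω ^ (ε⁻¹) ∂μ) ^ ε := by
        rw [e1, e2, one_div, inv_inv]
  _ ≤ _ := by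
        gcongr

lemma moment_bound {Ω : Type*} [MeasurableSpace Ω] (μ : Measure Ω) (Y : Ω → ℝ)
    (hYpos : ∀ ω, 0 ≤ Y ω) {r t : ℝ} (hr : 2 ≤ r) (ht : 0 ≤ t)
    (h : eLpNorm Y (ENNReal.ofReal r) μ ≤ ENNReal.ofReal t) :
    ∫⁻ ω, ENNReal.ofReal (Y ω) ^ r ∂μ ≤ ENNReal.ofReal t ^ r := by
  have hr0 : (0:ℝ) < r := by linarith
  have hne : ENNReal.ofReal r ≠ 0 := by
    simp [ENNReal.ofReal_eq_zero]; linarith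
  rw [eLpNorm_eq_lintegral_rpow_enorm_toReal hne ENNReal.ofReal_ne_top,
    ENNReal.toReal_ofReal hr0.le] at h
  have h2 := ENNReal.rpow_le_rpow h hr0.le
  rw [← ENNReal.rpow_mul, one_div, inv_mul_cancel₀ hr0.ne', ENNReal.rpow_one] at h2
  refine le_trans (le_of_eq ?_) h2
  apply lintegral_congr; intro ω
  congr 1
  rw [← ofReal_norm, Real.norm_of_nonneg (hYpos ω)]

lemma real_algebra {A B C σY L : ℝ} (hA : 0 < A) (hB : 0 < B) (hC : 0 < C)
    (hσ : 0 < σY) (hL : C < L) (hLdef : L = Real.log (B/A)) :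
    A ^ (1 - C/L) * B ^ (C/L) * (σY * (2/(C/L)) ^ C)
      = A * σY * (2*Real.exp 1)^C * ((1/C)*L)^C := by
  have hL0 : 0 < L := hC.trans hL
  have hBA : 0 < B / A := div_pos hB hA
  have e1 : A ^ (1 - C/L) * B ^ (C/L) = A * Real.exp C := by
    rw [Real.rpow_sub hA, Real.rpow_one]
    have : B ^ (C/L) = A ^ (C/L) * (B/A) ^ (C/L) := by
      rw [Real.div_rpow hB.le hA.le]
      field_simp
    rw [this]
    have hApow : A ^ (C/L) ≠ 0 := by positivity
    have e : (B/A) ^ (C/L) = Real.exp C := by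
      rw [Real.rpow_def_of_pos hBA, ← hLdef]
      congr 1
      field_simp
    rw [e]
    field_simp
  have e2 : (2/(C/L) : ℝ) = 2 * (L/C) := by
    rw [div_div_eq_mul_div]; ring
  rw [e1, e2, Real.mul_rpow (by norm_num) (by positivity),
    Real.mul_rpow (by norm_num) (Real.exp_pos 1).le, Real.exp_one_rpow, one_div,
    inv_mul_eq_div]
  ring

/-- Log-corrected Hölder for polynomial tails: if `‖Y‖_p ≤ σ_Y p^C` for all `p ≥ 2`, then
`E[XY] ≤ ‖X‖_1 σ_Y (2e)^C max(1, (1/C) log(‖X‖_2/‖X‖_1))^C`. -/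
theorem log_corrected_holder {Ω : Type*} [MeasurableSpace Ω] (μ : Measure Ω)
    [IsProbabilityMeasure μ] (X Y : Ω → ℝ) (hXm : Measurable X) (hYm : Measurable Y)
    (hXpos : ∀ ω, 0 ≤ X ω) (hYpos : ∀ ω, 0 ≤ Y ω)
    (hX2 : MemLp X 2 μ) (C σY : ℝ) (hC : 0 < C) (hσ : 0 < σY)
    (hmom : ∀ p : ℝ, 2 ≤ p →
      eLpNorm Y (ENNReal.ofReal p) μ ≤ ENNReal.ofReal (σY * p ^ C)) :
    ∫ ω, X ω * Y ω ∂μ ≤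
      (∫ ω, X ω ∂μ) * σY * (2 * Real.exp 1) ^ C *
        (max 1 ((1 / C) *
          Real.log ((∫ ω, X ω ^ 2 ∂μ) ^ ((1 : ℝ) / 2) / ∫ ω, X ω ∂μ))) ^ C := by
  have hXint : Integrable X μ :=
    memLp_one_iff_integrable.mp (hX2.mono_exponent (by norm_num))
  have hX2int : Integrable (fun ω => X ω ^ 2) μ := hX2.integrable_sq
  set A := ∫ ω, X ω ∂μ with hAdef
  set B2 := ∫ ω, X ω ^ 2 ∂μ with hB2def
  set B := B2 ^ ((1:ℝ)/2) with hBdef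
  set L := Real.log (B / A) with hLdef
  set M := max 1 ((1/C) * L) with hMdef
  have hA0 : 0 ≤ A := integral_nonneg hXpos
  have hB20 : 0 ≤ B2 := integral_nonneg fun ω => sq_nonneg _
  have hM1 : (1:ℝ) ≤ M := le_max_left _ _
  have hM0 : (0:ℝ) ≤ M := zero_le_one.trans hM1
  have hRHS0 : 0 ≤ A * σY * (2 * Real.exp 1) ^ C * M ^ C := by positivity
  -- case A = 0
  rcases hA0.eq_or_lt with hA | hA
  · have hX0 : X =ᵐ[μ] 0 := by
      rw [← integral_eq_zero_iff_of_nonneg hXpos hXint]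
      exact hA.symm
    have hXY0 : ∫ ω, X ω * Y ω ∂μ = 0 := by
      have h : (fun ω => X ω * Y ω) =ᵐ[μ] 0 := hX0.mono fun ω h => by simp [h]
      rw [integral_congr_ae h]; simp
    rw [hXY0, ← hA]
    simp
  -- A > 0
  have h22 : Real.HolderConjugate 2 2 := Real.holderConjugate_iff.mpr ⟨one_lt_two, by norm_num⟩
  have hAB : A ≤ B := by
    have hX2' : MemLp X (ENNReal.ofReal 2) μ := by
      rw [ENNReal.ofReal_ofNat]; exact hX2
    have h1 : MemLp (fun _ : Ω => (1:ℝ)) (ENNReal.ofReal 2) μ := memLp_const 1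
    have := integral_mul_le_Lp_mul_Lq_of_nonneg h22 (ae_of_all _ hXpos)
      (ae_of_all _ fun _ => zero_le_one) hX2' h1
    simp only [mul_one, Real.one_rpow, integral_const, measure_univ, probReal_univ, ENNReal.toReal_one,
      one_smul, smul_eq_mul] at this
    rw [hBdef, hB2def]
    have h2 : ∀ a : ℝ, a ^ (2:ℝ) = a ^ (2:ℕ) := fun a => by
      rw [show (2:ℝ) = ((2:ℕ):ℝ) by norm_num, Real.rpow_natCast]
    simp only [h2] at this
    exact this
  have hB : 0 < B := hA.trans_le hAB
  have hB2pos : 0 < B2 := by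
    rcases hB20.eq_or_lt with h | h
    · exfalso; rw [hBdef, ← h, Real.zero_rpow (by norm_num)] at hB; exact lt_irrefl 0 hB
    · exact h
  have hL0 : 0 ≤ L := Real.log_nonneg ((one_le_div hA).mpr hAB)
  -- ENNReal setup
  set F := fun ω => ENNReal.ofReal (X ω) with hFdef
  set G := fun ω => ENNReal.ofReal (Y ω) with hGdef
  have hFmeas : Measurable F := ENNReal.measurable_ofReal.comp hXm
  have hGmeas : Measurable G := ENNReal.measurable_ofReal.comp hYm
  have hIF : ∫⁻ ω, F ω ∂μ = ENNReal.ofReal A :=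
    (ofReal_integral_eq_lintegral_ofReal hXint (ae_of_all _ hXpos)).symm
  have hIF2 : ∫⁻ ω, F ω ^ (2:ℝ) ∂μ = ENNReal.ofReal B2 := by
    rw [hB2def, ofReal_integral_eq_lintegral_ofReal hX2int
      (ae_of_all _ fun ω => sq_nonneg _)]
    apply lintegral_congr; intro ω
    rw [hFdef, ENNReal.ofReal_rpow_of_nonneg (hXpos ω) (by norm_num)]
    congr 1
    rw [show (2:ℝ) = ((2:ℕ):ℝ) by norm_num, Real.rpow_natCast]
  have hInt_eq : ∫ ω, X ω * Y ω ∂μ = (∫⁻ ω, F ω * G ω ∂μ).toReal := by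
    rw [integral_eq_lintegral_of_nonneg_ae
      (ae_of_all _ fun ω => mul_nonneg (hXpos ω) (hYpos ω))
      ((hXm.mul hYm).aestronglyMeasurable)]
    congr 1
    apply lintegral_congr; intro ω
    exact ENNReal.ofReal_mul (hXpos ω)
  rw [hInt_eq]
  refine ENNReal.toReal_le_of_le_ofReal hRHS0 ?_
  -- main case split
  by_cases hLC : L ≤ C
  · -- small-log case: use Cauchy-Schwarz directly
    have hMeq : M = 1 := max_eq_left (by
      rw [one_div, inv_mul_le_iff₀ hC]; simpa using hLC)
    have hIG2 : (∫⁻ ω, G ω ^ (2:ℝ) ∂μ) ^ ((1:ℝ)/2) ≤ ENNReal.ofReal (σY * 2 ^ C) := by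
      have := moment_bound μ Y hYpos (le_refl 2) (by positivity) (hmom 2 (le_refl 2))
      have h2 := ENNReal.rpow_le_rpow this (by norm_num : (0:ℝ) ≤ 1/2)
      rwa [← ENNReal.rpow_mul, show (2:ℝ) * (1/2) = 1 by norm_num, ENNReal.rpow_one] at h2
    have hCS := ENNReal.lintegral_mul_le_Lp_mul_Lq μ h22 hFmeas.aemeasurable
      hGmeas.aemeasurable
    simp only [Pi.mul_apply] at hCS
    calc ∫⁻ ω, F ω * G ω ∂μ
        ≤ (∫⁻ ω, F ω ^ (2:ℝ) ∂μ) ^ ((1:ℝ)/2) * (∫⁻ ω, G ω ^ (2:ℝ) ∂μ) ^ ((1:ℝ)/2) := hCS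
      _ ≤ ENNReal.ofReal B * ENNReal.ofReal (σY * 2 ^ C) := by
          gcongr
          rw [hIF2, ENNReal.ofReal_rpow_of_nonneg hB20 (by norm_num)]
      _ = ENNReal.ofReal (B * (σY * 2 ^ C)) := (ENNReal.ofReal_mul hB.le).symm
      _ ≤ ENNReal.ofReal (A * σY * (2 * Real.exp 1) ^ C * M ^ C) := by
          apply ENNReal.ofReal_le_ofReal
          have hBA : B ≤ A * Real.exp C := by
            have : B / A ≤ Real.exp C := by
              rw [← Real.exp_log (div_pos hB hA)]
              exact Real.exp_le_exp.mpr (by rw [← hLdef]; exact hLC)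
            calc B = (B/A) * A := by field_simp
            _ ≤ Real.exp C * A := by gcongr
            _ = A * Real.exp C := mul_comm _ _
          rw [hMeq, Real.one_rpow, mul_one, Real.mul_rpow (by norm_num) (Real.exp_pos 1).le,
            Real.exp_one_rpow]
          calc B * (σY * 2 ^ C) ≤ (A * Real.exp C) * (σY * 2 ^ C) := by
                apply mul_le_mul_of_nonneg_right hBA (by positivity)
          _ = A * σY * (2 ^ C * Real.exp C) := by ring
  · -- large-log case
    push_neg at hLC
    have hL : 0 < L := hC.trans hLC
    set ε := C / L with hεdef
    have hε0 : 0 < ε := div_pos hC hL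
    have hε1 : ε < 1 := (div_lt_one hL).mpr hLC
    have hMeq : M = (1/C) * L := max_eq_right (by
      rw [one_div, le_inv_mul_iff₀ hC]; simpa using hLC.le)
    have hr2 : (2:ℝ) ≤ 2/ε := by
      rw [le_div_iff₀ hε0]; linarith
    set t := σY * (2/ε) ^ C with htdef
    have ht0 : 0 ≤ t := by positivity
    have hIGr : (∫⁻ ω, G ω ^ (2/ε) ∂μ) ^ ((1:ℝ)/2) ≤ ENNReal.ofReal t ^ ((1:ℝ)/ε) := by
      have := moment_bound μ Y hYpos hr2 ht0 (hmom (2/ε) hr2)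
      have h2 := ENNReal.rpow_le_rpow this (by norm_num : (0:ℝ) ≤ 1/2)
      rwa [← ENNReal.rpow_mul, show (2/ε) * (1/2) = 1/ε by ring] at h2
    calc ∫⁻ ω, F ω * G ω ∂μ
        ≤ (∫⁻ ω, F ω ∂μ) ^ (1 - ε) *
          ((∫⁻ ω, F ω ^ (2:ℝ) ∂μ) ^ ((1:ℝ)/2) * (∫⁻ ω, G ω ^ (2/ε) ∂μ) ^ ((1:ℝ)/2)) ^ ε :=
          holder_step μ F G hFmeas hGmeas hε0 hε1
      _ ≤ (ENNReal.ofReal A) ^ (1 - ε) *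
          ((ENNReal.ofReal B2) ^ ((1:ℝ)/2) * ENNReal.ofReal t ^ ((1:ℝ)/ε)) ^ ε := by
          rw [hIF, hIF2]
          gcongr
      _ = ENNReal.ofReal (A ^ (1-ε) * (B * t ^ ((1:ℝ)/ε)) ^ ε) := by
          rw [ENNReal.ofReal_rpow_of_nonneg hB20 (by norm_num),
            ENNReal.ofReal_rpow_of_nonneg ht0 (by positivity),
            ← ENNReal.ofReal_mul (by positivity),
            ENNReal.ofReal_rpow_of_nonneg (by positivity) hε0.le,
            ENNReal.ofReal_rpow_of_nonneg hA0 (by linarith),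
            ← ENNReal.ofReal_mul (by positivity)]
      _ ≤ ENNReal.ofReal (A * σY * (2 * Real.exp 1) ^ C * M ^ C) := by
          apply ENNReal.ofReal_le_ofReal
          apply le_of_eq
          have htε : (t ^ ((1:ℝ)/ε)) ^ ε = t := by
            rw [← Real.rpow_mul ht0, show (1:ℝ)/ε * ε = 1 by field_simp, Real.rpow_one]
          rw [Real.mul_rpow hB.le (by positivity), htε, hMeq, ← mul_assoc]
          exact real_algebra hA hB hC hσ hLC hLdef
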